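/- arXiv:1911.03295 — 5 statements merged into one kernel-verified Lean document; each statement's English description precedes it below -/
import Mathlib

section
/- Let f : ℝ^d → ℝ be differentiable and suppose it is weakly invariant to the j-th feature with constant C > 0, i.e. |∂f/∂x_j (x)| < C for all x ∈ ℝ^d. Let x_1, …, x_n ∈ ℝ^d be data points with ∑_{i=1}^n (x_i)_j² > 0, and let λ ≥ C · (∑_{i=1}^n |(x_i)_j|) / (∑_{i=1}^n (x_i)_j²). Then every global minimizer g* ∈ [0,1]^d of the MIND objective L(g) = (1/n) ∑_{i=1}^n [ |f(x_i) − f(g ⊙ x_i)| + λ ⟨g ⊙ x_i, x_i⟩ ] satisfies (g*)_j = 0. -/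
open Finset

open Finset

lemma mind_key {d : ℕ} (f : (Fin d → ℝ) → ℝ) (hf : Differentiable ℝ f) (j : Fin d) (C : ℝ)
    (hweak : ∀ x : Fin d → ℝ, |fderiv ℝ f x (Pi.single j 1)| < C)
    (a : Fin d → ℝ) (ha : a j ≠ 0) :
    |f a - f (Function.update a j 0)| < C * |a j| := by
  set φ : ℝ → ℝ := fun s => f (Function.update a j s) with hφ
  have hu : ∀ s : ℝ, HasDerivAt (fun s : ℝ => Function.update a j s)
      (Pi.single j 1) s := by
    intro s
    have h1 : (fun s : ℝ => Function.update a j s)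
        = fun s : ℝ => Function.update a j 0 + s • (Pi.single j 1 : Fin d → ℝ) := by
      funext s k
      by_cases hk : k = j
      · subst hk; simp
      · simp [Function.update_of_ne hk, Pi.single_eq_of_ne hk]
    rw [h1]
    have := ((hasDerivAt_id s).smul_const (Pi.single j 1 : Fin d → ℝ)).const_add
      (Function.update a j 0)
    simpa using this
  have hφd : ∀ s : ℝ, HasDerivAt φ
      (fderiv ℝ f (Function.update a j s) (Pi.single j 1)) s := by
    intro s
    exact ((hf (Function.update a j s)).hasFDerivAt).comp_hasDerivAt s (hu s)
  have hφt : φ (a j) = f a := by simp [hφ]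
  have hcont : Continuous φ := by
    exact hf.continuous.comp (continuous_const.update j continuous_id)
  rcases lt_or_gt_of_ne ha with h | h
  · -- a j < 0
    obtain ⟨c, _, hc⟩ := exists_hasDerivAt_eq_slope φ
      (fun s => fderiv ℝ f (Function.update a j s) (Pi.single j 1)) h
      (hcont.continuousOn) (fun s _ => hφd s)
    have : (φ 0 - φ (a j)) / (0 - a j) = fderiv ℝ f (Function.update a j c) (Pi.single j 1) :=
      hc.symm
    have habs := hweak (Function.update a j c)
    rw [← this, abs_div] at habs
    have hne : |0 - a j| > 0 := by simp [abs_pos, ha]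
    rw [div_lt_iff₀ hne] at habs
    calc |f a - f (Function.update a j 0)| = |φ 0 - φ (a j)| := by
          rw [hφt]; simp [hφ, abs_sub_comm]
      _ < C * |0 - a j| := habs
      _ = C * |a j| := by rw [abs_sub_comm]; simp
  · obtain ⟨c, _, hc⟩ := exists_hasDerivAt_eq_slope φ
      (fun s => fderiv ℝ f (Function.update a j s) (Pi.single j 1)) h
      (hcont.continuousOn) (fun s _ => hφd s)
    have : (φ (a j) - φ 0) / (a j - 0) = fderiv ℝ f (Function.update a j c) (Pi.single j 1) :=
      hc.symm
    have habs := hweak (Function.update a j c)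
    rw [← this, abs_div] at habs
    have hne : |a j - 0| > 0 := by simp [abs_pos, ha]
    rw [div_lt_iff₀ hne] at habs
    calc |f a - f (Function.update a j 0)| = |φ (a j) - φ 0| := by rw [hφt]
      _ < C * |a j - 0| := habs
      _ = C * |a j| := by simp

/-- **MIND correctness theorem (Theorem 1).**
If `f : ℝ^d → ℝ` is differentiable and weakly invariant to the `j`-th feature with
constant `C > 0` (i.e. `|∂f/∂x_j (x)| < C` for all `x`), the data satisfy
`∑ i, (x i j)^2 > 0`, and `λ ≥ C ∑ i |x i j| / ∑ i (x i j)^2`, then every global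
minimizer `g` over `[0,1]^d` of the MIND objective
`L(g) = (1/n) ∑ i [ |f(x_i) − f(g ⊙ x_i)| + λ ⟨g ⊙ x_i, x_i⟩ ]`
satisfies `g j = 0`. -/
theorem mind_correctness {d n : ℕ} (f : (Fin d → ℝ) → ℝ) (hf : Differentiable ℝ f)
    (j : Fin d) (C : ℝ) (hC : 0 < C)
    (hweak : ∀ x : Fin d → ℝ, |fderiv ℝ f x (Pi.single j 1)| < C)
    (x : Fin n → Fin d → ℝ)
    (hx : 0 < ∑ i, (x i j) ^ 2)
    (lam : ℝ) (hlam : C * (∑ i, |x i j|) / (∑ i, (x i j) ^ 2) ≤ lam)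
    (L : (Fin d → ℝ) → ℝ)
    (hL : ∀ g : Fin d → ℝ,
      L g = (1 / (n : ℝ)) * ∑ i, (|f (x i) - f (fun k => g k * x i k)|
              + lam * ∑ k, (g k * x i k) * x i k))
    (g : Fin d → ℝ) (hg : ∀ k, g k ∈ Set.Icc (0 : ℝ) 1)
    (hmin : ∀ g' : Fin d → ℝ, (∀ k, g' k ∈ Set.Icc (0 : ℝ) 1) → L g ≤ L g') :
    g j = 0 := by
  by_contra hgj
  set t := g j with htdef
  have ht0 : 0 ≤ t := (hg j).1
  have ht : 0 < t := lt_of_le_of_ne ht0 (Ne.symm hgj)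
  have hn : 0 < (n : ℝ) := by
    rcases Nat.eq_zero_or_pos n with h | h
    · subst h; simp at hx
    · exact_mod_cast h
  set g' : Fin d → ℝ := Function.update g j 0 with hg'def
  have hg' : ∀ k, g' k ∈ Set.Icc (0 : ℝ) 1 := by
    intro k
    by_cases hk : k = j
    · subst hk; simp [hg'def]
    · simpa [hg'def, Function.update_of_ne hk] using hg k
  set a : Fin n → Fin d → ℝ := fun i k => g k * x i k with hadef
  have hb : ∀ i, (fun k => g' k * x i k) = Function.update (a i) j 0 := by
    intro i; funext k
    by_cases hk : k = j
    · subst hk; simp [hg'def, hadef]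
    · simp [hg'def, hadef, Function.update_of_ne hk]
  have hinner : ∀ i, (∑ k, (g k * x i k) * x i k) - (∑ k, (g' k * x i k) * x i k)
      = t * (x i j) ^ 2 := by
    intro i
    rw [← Finset.sum_sub_distrib]
    rw [Finset.sum_eq_single j]
    · simp [hg'def]; ring
    · intro k _ hk
      simp [hg'def, Function.update_of_ne hk]
    · simp
  set T : (Fin d → ℝ) → Fin n → ℝ := fun h i =>
    |f (x i) - f (fun k => h k * x i k)| + lam * ∑ k, (h k * x i k) * x i k with hT
  set E : Fin n → ℝ := fun i => t * (lam * (x i j) ^ 2 - C * |x i j|) with hE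
  have hDE : ∀ i, x i j ≠ 0 → T g' i + E i < T g i := by
    intro i hxi
    have haj : a i j ≠ 0 := by
      simp only [hadef]; exact mul_ne_zero hgj hxi
    have hkey := mind_key f hf j C hweak (a i) haj
    have habs : |a i j| = t * |x i j| := by
      simp [hadef, abs_mul, abs_of_nonneg ht0, abs_of_nonneg (hg j).1, htdef]
    rw [habs] at hkey
    have h1 : |f (x i) - f (Function.update (a i) j 0)| - |f (x i) - f (a i)|
        ≤ |f (a i) - f (Function.update (a i) j 0)| := by
      have h := abs_sub_abs_le_abs_sub (f (x i) - f (Function.update (a i) j 0))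
        (f (x i) - f (a i))
      have heq : (f (x i) - f (Function.update (a i) j 0)) - (f (x i) - f (a i))
          = f (a i) - f (Function.update (a i) j 0) := by ring
      rwa [heq] at h
    have hin := hinner i
    have hin2 : lam * (∑ k, (g k * x i k) * x i k) - lam * (∑ k, (g' k * x i k) * x i k)
        = lam * (t * (x i j) ^ 2) := by rw [← mul_sub, hin]
    simp only [hT, hE]
    rw [hb i]
    have haeq : (fun k => g k * x i k) = a i := rfl
    rw [haeq]
    nlinarith [h1, hkey, hin2]
  have hDE0 : ∀ i, x i j = 0 → T g' i + E i = T g i := by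
    intro i hxi
    have hab : (fun k => g' k * x i k) = (fun k => g k * x i k) := by
      funext k
      by_cases hk : k = j
      · subst hk; simp [hxi]
      · simp [hg'def, Function.update_of_ne hk]
    have h0 : E i = 0 := by simp [hE, hxi]
    have h := hinner i
    rw [hxi] at h
    simp only [hT, h0, add_zero, hab]
    have hsumeq : (∑ k, (g' k * x i k) * x i k) = ∑ k, (g k * x i k) * x i k := by
      simp at h; linarith
    rw [hsumeq]
  obtain ⟨i₀, hi₀⟩ : ∃ i, x i j ≠ 0 := by
    by_contra hall
    push_neg at hall
    simp [hall] at hx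
  have hsum : ∑ i, (T g' i + E i) < ∑ i, T g i := by
    apply Finset.sum_lt_sum
    · intro i _
      by_cases hxi : x i j = 0
      · exact le_of_eq (hDE0 i hxi)
      · exact le_of_lt (hDE i hxi)
    · exact ⟨i₀, Finset.mem_univ i₀, hDE i₀ hi₀⟩
  have hEsum : 0 ≤ ∑ i, E i := by
    have h1 : C * (∑ i, |x i j|) ≤ lam * (∑ i, (x i j) ^ 2) := by
      rw [div_le_iff₀ hx] at hlam
      linarith [hlam]
    have h2 : ∑ i, E i = t * lam * (∑ i, (x i j) ^ 2) - t * C * (∑ i, |x i j|) := by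
      rw [Finset.mul_sum, Finset.mul_sum, ← Finset.sum_sub_distrib]
      exact Finset.sum_congr rfl (fun i _ => by simp only [hE]; ring)
    rw [h2]
    nlinarith
  have hfinal : L g' < L g := by
    rw [hL g, hL g']
    apply mul_lt_mul_of_pos_left _ (by positivity : (0:ℝ) < 1 / (n:ℝ))
    show (∑ i, T g' i) < ∑ i, T g i
    calc ∑ i, T g' i ≤ ∑ i, (T g' i + E i) := by
          have hsplit : (∑ i, (T g' i + E i)) = (∑ i, T g' i) + ∑ i, E i :=
            Finset.sum_add_distrib
          linarith [hEsum, hsplit]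
      _ < ∑ i, T g i := hsum
  exact absurd (hmin g' hg') (not_le.mpr hfinal)
end

section
/- Let f : ℝ^d → ℝ be differentiable with |∂f/∂x_j (x)| < C for all x ∈ ℝ^d, let x_1, …, x_n ∈ ℝ^d with (x_i)_j ≠ 0 for at least one i, and let λ > 0 satisfy λ · ∑_{i=1}^n (x_i)_j² ≥ C · ∑_{i=1}^n |(x_i)_j|. Fix all coordinates of g ∈ [0,1]^d except the j-th. Then the function t ↦ (1/n) ∑_{i=1}^n [ |f(x_i) − f(g(t) ⊙ x_i)| + λ ⟨g(t) ⊙ x_i, x_i⟩ ], where g(t) agrees with g except that its j-th coordinate equals t, is strictly increasing on [0,1]; in particular its unique minimum on [0,1] is attained at t = 0. -/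
open Finset

lemma mind_aux_deriv {d : ℕ} (f : (Fin d → ℝ) → ℝ) (hf : Differentiable ℝ f) (j : Fin d)
    (g v : Fin d → ℝ) (r : ℝ) :
    HasDerivAt (fun t => f (fun k => Function.update g j t k * v k))
      (v j * fderiv ℝ f (fun k => Function.update g j r k * v k) (Pi.single j 1)) r := by
  have h1 : HasDerivAt (fun t : ℝ => (fun k => Function.update g j t k * v k : Fin d → ℝ))
      (v j • (Pi.single j 1 : Fin d → ℝ)) r := by
    have heq : (fun t : ℝ => (fun k => Function.update g j t k * v k : Fin d → ℝ))
        = fun t : ℝ => (fun k => Function.update g j 0 k * v k : Fin d → ℝ)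
            + t • (v j • (Pi.single j 1 : Fin d → ℝ)) := by
      funext t k
      by_cases hk : k = j
      · subst hk
        simp [mul_comm]
      · simp [Function.update_of_ne hk, Pi.single_eq_of_ne hk]
    rw [heq]
    simpa using ((hasDerivAt_id r).smul_const (v j • (Pi.single j 1 : Fin d → ℝ))).const_add
      (fun k => Function.update g j 0 k * v k : Fin d → ℝ)
  have h2 := (hf _).hasFDerivAt.comp_hasDerivAt r h1
  simpa [Function.comp_def, map_smul, smul_eq_mul] using h2

/-- With `f` weakly invariant to the `j`-th feature (`|∂f/∂x_j (x)| < C` everywhere),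
some data point having a nonzero `j`-th coordinate, and
`λ ∑ i (x i j)^2 ≥ C ∑ i |x i j|` with `λ > 0`, the single-coordinate section
`t ↦ (1/n) ∑ i [ |f(x_i) − f(g(t) ⊙ x_i)| + λ ⟨g(t) ⊙ x_i, x_i⟩ ]`
of the MIND objective (where `g(t)` agrees with `g` except its `j`-th coordinate is `t`)
is strictly increasing on `[0,1]`; in particular its unique minimum on `[0,1]`
is attained at `t = 0`. -/
theorem mind_section_strictMono {d n : ℕ} (f : (Fin d → ℝ) → ℝ)
    (hf : Differentiable ℝ f)
    (j : Fin d) (C : ℝ)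
    (hweak : ∀ x : Fin d → ℝ, |fderiv ℝ f x (Pi.single j 1)| < C)
    (x : Fin n → Fin d → ℝ)
    (hx : ∃ i, x i j ≠ 0)
    (lam : ℝ) (hlam : 0 < lam)
    (hlam2 : C * ∑ i, |x i j| ≤ lam * ∑ i, (x i j) ^ 2)
    (g : Fin d → ℝ) (hg : ∀ k, g k ∈ Set.Icc (0 : ℝ) 1)
    (φ : ℝ → ℝ)
    (hφ : ∀ t : ℝ,
      φ t = (1 / (n : ℝ)) * ∑ i,
        (|f (x i) - f (fun k => Function.update g j t k * x i k)|
          + lam * ∑ k, (Function.update g j t k * x i k) * x i k)) :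
    StrictMonoOn φ (Set.Icc (0 : ℝ) 1) ∧
      ∀ t ∈ Set.Icc (0 : ℝ) 1, t ≠ 0 → φ 0 < φ t := by
  obtain ⟨i0, hi0⟩ := hx
  have hn : (0:ℝ) < n := by exact_mod_cast i0.pos
  have key : ∀ t s : ℝ, t < s → φ t < φ s := by
    intro t s hts
    have hst : (0:ℝ) < s - t := by linarith
    have hne : s - t ≠ 0 := ne_of_gt hst
    have hmvt : ∀ i : Fin n, ∃ c : ℝ,
        f (fun k => Function.update g j s k * x i k)
            - f (fun k => Function.update g j t k * x i k)
          = (s - t) * (x i j *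
              fderiv ℝ f (fun k => Function.update g j c k * x i k) (Pi.single j 1)) := by
      intro i
      obtain ⟨c, _, hc⟩ := exists_hasDerivAt_eq_slope
        (fun r => f (fun k => Function.update g j r k * x i k))
        (fun r => x i j * fderiv ℝ f (fun k => Function.update g j r k * x i k) (Pi.single j 1))
        hts
        (fun r _ => (mind_aux_deriv f hf j g (x i) r).continuousAt.continuousWithinAt)
        (fun r _ => mind_aux_deriv f hf j g (x i) r)
      have h := (div_eq_iff hne).mp hc.symm
      exact ⟨c, by rw [h]; ring⟩
    have habs : ∀ i : Fin n,
        |f (fun k => Function.update g j s k * x i k)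
            - f (fun k => Function.update g j t k * x i k)|
          ≤ (s - t) * (C * |x i j|) := by
      intro i
      obtain ⟨c, hc⟩ := hmvt i
      rw [hc, abs_mul, abs_mul, abs_of_pos hst]
      have h1 := le_of_lt (hweak (fun k => Function.update g j c k * x i k))
      have h4 := mul_le_mul_of_nonneg_left h1 (abs_nonneg (x i j))
      exact mul_le_mul_of_nonneg_left (by linarith [h4]) (le_of_lt hst)
    have hstrict :
        |f (fun k => Function.update g j s k * x i0 k)
            - f (fun k => Function.update g j t k * x i0 k)|
          < (s - t) * (C * |x i0 j|) := by
      obtain ⟨c, hc⟩ := hmvt i0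
      rw [hc, abs_mul, abs_mul, abs_of_pos hst]
      have h1 := hweak (fun k => Function.update g j c k * x i0 k)
      have h2 : 0 < |x i0 j| := abs_pos.mpr hi0
      have h4 := mul_lt_mul_of_pos_left h1 h2
      exact (mul_lt_mul_iff_right₀ hst).mpr (by linarith [h4])
    have hsum : ∑ i, |f (fun k => Function.update g j s k * x i k)
            - f (fun k => Function.update g j t k * x i k)|
          < (s - t) * (C * ∑ i, |x i j|) := by
      calc ∑ i, |f (fun k => Function.update g j s k * x i k)
            - f (fun k => Function.update g j t k * x i k)|
          < ∑ i, (s - t) * (C * |x i j|) :=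
            Finset.sum_lt_sum (fun i _ => habs i) ⟨i0, Finset.mem_univ i0, hstrict⟩
        _ = (s - t) * (C * ∑ i, |x i j|) := by rw [Finset.mul_sum, Finset.mul_sum]
    have hlamterm : ∀ i : Fin n,
        (∑ k, Function.update g j s k * x i k * x i k)
          = (∑ k, Function.update g j t k * x i k * x i k) + (s - t) * x i j ^ 2 := by
      intro i
      have h1 : ∀ r : ℝ, (∑ k, Function.update g j r k * x i k * x i k)
          = r * x i j ^ 2 + ∑ k ∈ Finset.univ.erase j, g k * x i k * x i k := by
        intro r
        rw [← Finset.add_sum_erase _ _ (Finset.mem_univ j), Function.update_self]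
        congr 1
        · ring
        · exact Finset.sum_congr rfl fun k hk => by
            rw [Function.update_of_ne (Finset.ne_of_mem_erase hk)]
      rw [h1 s, h1 t]; ring
    have hper : ∀ i : Fin n,
        |f (x i) - f (fun k => Function.update g j t k * x i k)|
          - |f (x i) - f (fun k => Function.update g j s k * x i k)|
          ≤ |f (fun k => Function.update g j s k * x i k)
              - f (fun k => Function.update g j t k * x i k)| := by
      intro i
      have h := abs_sub_abs_le_abs_sub
        (f (x i) - f (fun k => Function.update g j t k * x i k))
        (f (x i) - f (fun k => Function.update g j s k * x i k))
      have e : (f (x i) - f (fun k => Function.update g j t k * x i k))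
          - (f (x i) - f (fun k => Function.update g j s k * x i k))
          = f (fun k => Function.update g j s k * x i k)
              - f (fun k => Function.update g j t k * x i k) := by ring
      rw [e] at h
      exact h
    have hsum2 : ∑ i, (|f (x i) - f (fun k => Function.update g j t k * x i k)|
          - |f (x i) - f (fun k => Function.update g j s k * x i k)|)
        < (s - t) * (C * ∑ i, |x i j|) :=
      lt_of_le_of_lt (Finset.sum_le_sum fun i _ => hper i) hsum
    rw [hφ t, hφ s, ← sub_pos, ← mul_sub]
    apply mul_pos (one_div_pos.mpr hn)
    rw [← Finset.sum_sub_distrib]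
    have hdiff : ∀ i ∈ Finset.univ, (|f (x i) - f (fun k => Function.update g j s k * x i k)|
          + lam * ∑ k, (Function.update g j s k * x i k) * x i k)
        - (|f (x i) - f (fun k => Function.update g j t k * x i k)|
          + lam * ∑ k, (Function.update g j t k * x i k) * x i k)
        = lam * ((s - t) * x i j ^ 2)
          - (|f (x i) - f (fun k => Function.update g j t k * x i k)|
              - |f (x i) - f (fun k => Function.update g j s k * x i k)|) := by
      intro i _
      rw [hlamterm i]; ring
    rw [Finset.sum_congr rfl hdiff, Finset.sum_sub_distrib]
    have e1 : ∑ i, lam * ((s - t) * x i j ^ 2) = lam * ((s - t) * ∑ i, x i j ^ 2) := by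
      rw [Finset.mul_sum, Finset.mul_sum]
    rw [e1]
    have h3 : (s - t) * (C * ∑ i, |x i j|) ≤ (s - t) * (lam * ∑ i, x i j ^ 2) :=
      mul_le_mul_of_nonneg_left hlam2 (le_of_lt hst)
    nlinarith [hsum2, h3]
  refine ⟨fun a _ b _ hab => key a b hab, fun t ht hne => key 0 t (lt_of_le_of_ne ht.1 (Ne.symm hne))⟩
end

section
/- Let x_1, …, x_n ∈ ℝ^d, C_n = (1/n) ∑_{i=1}^n x_i x_iᵀ, β ∈ ℝ^d, B = diag(β), and λ > 0. A point g ∈ ℝ^d is a stationary point of the unconstrained objective J(g) = (1/n) ∑_{i=1}^n [ (βᵀ(x_i − g ⊙ x_i))² + λ ⟨g ⊙ x_i, x_i⟩ ] (i.e. ∇J(g) = 0) if and only if, with q = 1 − g, it satisfies the linear system B C_n B q = (λ/2) · diag(C_n). In particular, if B C_n B is invertible, the unique stationary point is g = 1 − (λ/2) (B C_n B)^{−1} diag(C_n). -/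
open Finset Matrix

/-- A point `g ∈ ℝ^d` is a stationary point of the unconstrained simplified MIND
objective `J(g) = (1/n) ∑ i [ (βᵀ(x_i − g ⊙ x_i))² + λ ⟨g ⊙ x_i, x_i⟩ ]`
(i.e. `∇J(g) = 0`) iff, with `q = 1 − g`, it satisfies the linear system
`B C_n B q = (λ/2) diag(C_n)`, where `C_n = (1/n) ∑ i x_i x_iᵀ` and `B = diag β`.
In particular, if `B C_n B` is invertible, the unique stationary point is
`g = 1 − (λ/2) (B C_n B)⁻¹ diag(C_n)`. -/
theorem mind_stationary_iff {d n : ℕ}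
    (x : Fin n → Fin d → ℝ)
    (Cn : Matrix (Fin d) (Fin d) ℝ)
    (hCn : Cn = (1 / (n : ℝ)) • ∑ i, Matrix.vecMulVec (x i) (x i))
    (β : Fin d → ℝ)
    (B : Matrix (Fin d) (Fin d) ℝ) (hB : B = Matrix.diagonal β)
    (lam : ℝ) (hlam : 0 < lam)
    (J : (Fin d → ℝ) → ℝ)
    (hJ : ∀ g : Fin d → ℝ,
      J g = (1 / (n : ℝ)) * ∑ i,
        ((∑ k, β k * (x i k - g k * x i k)) ^ 2
          + lam * ∑ k, (g k * x i k) * x i k)) :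
    (∀ g : Fin d → ℝ,
      fderiv ℝ J g = 0 ↔ (B * Cn * B) *ᵥ ((1 : Fin d → ℝ) - g) = (lam / 2) • Matrix.diag Cn) ∧
    (IsUnit (B * Cn * B) →
      ∀ g : Fin d → ℝ,
        fderiv ℝ J g = 0 ↔
          g = (1 : Fin d → ℝ) - (lam / 2) • ((B * Cn * B)⁻¹ *ᵥ Matrix.diag Cn)) := by
  have hJfun : J = fun g => (1 / (n : ℝ)) * ∑ i,
      ((∑ k, β k * (x i k - g k * x i k)) ^ 2
        + lam * ∑ k, (g k * x i k) * x i k) := funext hJ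
  -- linear maps
  set ℓ : Fin n → (Fin d → ℝ) →L[ℝ] ℝ :=
    fun i => ∑ k, (β k * x i k) • (ContinuousLinearMap.proj k : (Fin d → ℝ) →L[ℝ] ℝ) with hℓdef
  set ℓ' : Fin n → (Fin d → ℝ) →L[ℝ] ℝ :=
    fun i => ∑ k, (x i k * x i k) • (ContinuousLinearMap.proj k : (Fin d → ℝ) →L[ℝ] ℝ) with hℓ'def
  have hℓapp : ∀ i v, ℓ i v = ∑ k, β k * x i k * v k := by
    intro i v
    simp [hℓdef, ContinuousLinearMap.sum_apply]
  have hℓ'app : ∀ i v, ℓ' i v = ∑ k, x i k * x i k * v k := by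
    intro i v
    simp [hℓ'def, ContinuousLinearMap.sum_apply]
  have hBCB : ∀ j m, (B * Cn * B) j m = β j * Cn j m * β m := by
    intro j m
    rw [hB, Matrix.mul_diagonal, Matrix.diagonal_mul]
  -- the derivative
  have key : ∀ g : Fin d → ℝ,
      fderiv ℝ J g = 0 ↔
        (B * Cn * B) *ᵥ ((1 : Fin d → ℝ) - g) = (lam / 2) • Matrix.diag Cn := by
    intro g
    set s : Fin n → ℝ := fun i => ∑ k, β k * (x i k - g k * x i k) with hs
    set D : (Fin d → ℝ) →L[ℝ] ℝ :=
      (1 / (n : ℝ)) • ∑ i, ((s i • (-(ℓ i)) + s i • (-(ℓ i))) + lam • ℓ' i) with hD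
    -- derivative of each linear piece
    have h1 : ∀ i, HasFDerivAt (fun g : Fin d → ℝ => ∑ k, β k * (x i k - g k * x i k))
        (-(ℓ i)) g := by
      intro i
      have hfun : (fun g : Fin d → ℝ => ∑ k, β k * (x i k - g k * x i k))
          = fun g => (∑ k, β k * x i k) - ℓ i g := by
        funext g
        rw [hℓapp]
        rw [← Finset.sum_sub_distrib]
        exact Finset.sum_congr rfl fun k _ => by ring
      rw [hfun]
      exact (ℓ i).hasFDerivAt.const_sub _
    have h2 : ∀ i, HasFDerivAt (fun g : Fin d → ℝ => ∑ k, (g k * x i k) * x i k)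
        (ℓ' i) g := by
      intro i
      have hfun : (fun g : Fin d → ℝ => ∑ k, (g k * x i k) * x i k)
          = fun g => ℓ' i g := by
        funext g
        rw [hℓ'app]
        exact Finset.sum_congr rfl fun k _ => by ring
      rw [hfun]
      exact (ℓ' i).hasFDerivAt
    have hder : HasFDerivAt J D g := by
      rw [hJfun, hD]
      simp only [pow_two]
      refine HasFDerivAt.const_mul ?_ _
      refine HasFDerivAt.fun_sum fun i _ => ?_
      exact ((h1 i).mul (h1 i)).add ((h2 i).const_mul lam)
    have hfd : fderiv ℝ J g = D := hder.fderiv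
    -- value of D on basis vectors
    have hDapp : ∀ j, D (Pi.single j 1)
        = (1 / (n : ℝ)) * ∑ i, (-2 * (s i * (β j * x i j)) + lam * (x i j * x i j)) := by
      intro j
      rw [hD]
      simp only [ContinuousLinearMap.smul_apply, ContinuousLinearMap.sum_apply,
        ContinuousLinearMap.add_apply, ContinuousLinearMap.neg_apply, smul_eq_mul]
      congr 1
      refine Finset.sum_congr rfl fun i _ => ?_
      have e1 : ℓ i (Pi.single j 1) = β j * x i j := by
        rw [hℓapp]
        simp [Pi.single_apply, mul_ite, Finset.sum_ite_eq']
      have e2 : ℓ' i (Pi.single j 1) = x i j * x i j := by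
        rw [hℓ'app]
        simp [Pi.single_apply, mul_ite, Finset.sum_ite_eq']
      rw [e1, e2]
      ring
    -- matrix side, componentwise
    have hL : ∀ j, ((B * Cn * B) *ᵥ ((1 : Fin d → ℝ) - g)) j
        = (1 / (n : ℝ)) * ∑ i, s i * (β j * x i j) := by
      intro j
      have hLHS : ((B * Cn * B) *ᵥ ((1 : Fin d → ℝ) - g)) j
          = ∑ i, ∑ m, (1 / (n : ℝ)) * (β j * x i j * (β m * x i m * (1 - g m))) := by
        simp only [Matrix.mulVec, dotProduct, hBCB, Pi.sub_apply, Pi.one_apply]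
        rw [Finset.sum_comm]
        refine Finset.sum_congr rfl fun m _ => ?_
        rw [hCn]
        simp only [Matrix.smul_apply, Matrix.sum_apply, Matrix.vecMulVec_apply, smul_eq_mul]
        rw [Finset.mul_sum, Finset.mul_sum, Finset.sum_mul, Finset.sum_mul]
        exact Finset.sum_congr rfl fun i _ => by ring
      have hRHS : (1 / (n : ℝ)) * ∑ i, s i * (β j * x i j)
          = ∑ i, ∑ m, (1 / (n : ℝ)) * (β j * x i j * (β m * x i m * (1 - g m))) := by
        rw [Finset.mul_sum]
        refine Finset.sum_congr rfl fun i _ => ?_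
        simp only [hs]
        rw [Finset.sum_mul, Finset.mul_sum]
        exact Finset.sum_congr rfl fun m _ => by ring
      rw [hLHS, hRHS]
    have hR : ∀ j, ((lam / 2) • Matrix.diag Cn) j
        = (lam / 2) * ((1 / (n : ℝ)) * ∑ i, x i j * x i j) := by
      intro j
      rw [hCn]
      simp [Matrix.diag, Matrix.sum_apply, Matrix.vecMulVec_apply, Finset.mul_sum]
    -- relate D to matrix equation componentwise
    have hrel : ∀ j, D (Pi.single j 1)
        = -2 * (((B * Cn * B) *ᵥ ((1 : Fin d → ℝ) - g)) j - ((lam / 2) • Matrix.diag Cn) j) := by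
      intro j
      rw [hDapp, hL, hR]
      rw [Finset.sum_add_distrib, ← Finset.mul_sum, ← Finset.mul_sum]
      ring
    rw [hfd]
    constructor
    · intro h0
      funext j
      have hj := hrel j
      rw [h0] at hj
      simp only [ContinuousLinearMap.zero_apply] at hj
      have h2 : ((B * Cn * B) *ᵥ ((1 : Fin d → ℝ) - g)) j - ((lam / 2) • Matrix.diag Cn) j = 0 := by
        linarith
      linarith
    · intro heq
      ext v
      have hv : v = ∑ j, v j • (Pi.single j 1 : Fin d → ℝ) := by
        funext k
        simp [Pi.single_apply, Finset.sum_ite_eq']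
      show D v = 0
      rw [hv, map_sum]
      refine Finset.sum_eq_zero fun j _ => ?_
      have hj := hrel j
      rw [heq] at hj
      simp only [sub_self, mul_zero] at hj
      rw [ContinuousLinearMap.map_smul, hj, smul_zero]
  refine ⟨key, ?_⟩
  intro hU g
  rw [key g]
  have hdet : IsUnit (B * Cn * B).det := (Matrix.isUnit_iff_isUnit_det _).mp hU
  constructor
  · intro h
    have h' : (B * Cn * B)⁻¹ *ᵥ ((B * Cn * B) *ᵥ ((1 : Fin d → ℝ) - g))
        = (B * Cn * B)⁻¹ *ᵥ ((lam / 2) • Matrix.diag Cn) := by rw [h]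
    rw [Matrix.mulVec_mulVec, Matrix.nonsing_inv_mul _ hdet, Matrix.one_mulVec,
      Matrix.mulVec_smul] at h'
    rw [← h']
    funext k
    simp [Pi.sub_apply]
  · intro h
    have hq : (1 : Fin d → ℝ) - g = (lam / 2) • ((B * Cn * B)⁻¹ *ᵥ Matrix.diag Cn) := by
      rw [h]
      funext k
      simp [Pi.sub_apply]
    rw [hq, ← Matrix.mulVec_smul, Matrix.mulVec_mulVec, Matrix.mul_nonsing_inv _ hdet,
      Matrix.one_mulVec]
end

section
/- Let x_1, …, x_n ∈ ℝ^d with empirical second-moment matrix C_n = (1/n) ∑_{i=1}^n x_i x_iᵀ, let β ∈ ℝ^d with all coordinates nonzero, and suppose C_n is a diagonal matrix with positive diagonal entries. Then for every λ > 0 and every j ∈ {1, …, d}, the minimizer g* ∈ [0,1]^d of J(g) = (1/n) ∑_{i=1}^n [ (βᵀ(x_i − g ⊙ x_i))² + λ ⟨g ⊙ x_i, x_i⟩ ] satisfies (g*)_j = clamp_{[0,1]}( 1 − λ β_j^{−2} / 2 ), where clamp_{[0,1]} projects a real number onto the interval [0,1]. -/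
open Finset

set_option maxHeartbeats 2000000 in
/-- **Uncorrelated-features case.**
If the empirical second-moment matrix `C_n = (1/n) ∑ i x_i x_iᵀ` is diagonal with
positive diagonal entries and every coordinate of `β` is nonzero, then for every
`λ > 0` and every coordinate `j`, any minimizer `g*` over `[0,1]^d` of
`J(g) = (1/n) ∑ i [ (βᵀ(x_i − g ⊙ x_i))² + λ ⟨g ⊙ x_i, x_i⟩ ]`
satisfies `(g*)_j = clamp_{[0,1]}(1 − λ β_j⁻² / 2)`. -/
theorem mind_uncorrelated {d n : ℕ}
    (x : Fin n → Fin d → ℝ)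
    (Cn : Matrix (Fin d) (Fin d) ℝ)
    (hCn : Cn = (1 / (n : ℝ)) • ∑ i, Matrix.vecMulVec (x i) (x i))
    (β : Fin d → ℝ) (hβ : ∀ k, β k ≠ 0)
    (hdiag : ∀ k l, k ≠ l → Cn k l = 0)
    (hpos : ∀ k, 0 < Cn k k) :
    ∀ lam : ℝ, 0 < lam → ∀ j : Fin d,
      ∀ J : (Fin d → ℝ) → ℝ,
        (∀ g : Fin d → ℝ,
          J g = (1 / (n : ℝ)) * ∑ i,
            ((∑ k, β k * (x i k - g k * x i k)) ^ 2
              + lam * ∑ k, (g k * x i k) * x i k)) →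
      ∀ gstar : Fin d → ℝ, (∀ k, gstar k ∈ Set.Icc (0 : ℝ) 1) →
        (∀ g : Fin d → ℝ, (∀ k, g k ∈ Set.Icc (0 : ℝ) 1) → J gstar ≤ J g) →
        gstar j = max 0 (min 1 (1 - lam * ((β j) ^ 2)⁻¹ / 2)) := by
  intro lam hlam j J hJ gstar hbox hmin
  have hC : ∀ k l, Cn k l = (1/(n:ℝ)) * ∑ i, x i k * x i l := by
    intro k l
    rw [hCn]
    simp [Matrix.sum_apply, Matrix.vecMulVec_apply, Finset.mul_sum]
  set b : ℝ := β j ^ 2 with hbdef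
  have hb : (0:ℝ) < b := by
    have h := hβ j
    rw [hbdef]
    positivity
  set sstar : ℝ := 1 - lam * b⁻¹ / 2 with hsstar
  set t : ℝ := max 0 (min 1 sstar) with ht
  set s : ℝ := gstar j with hs
  have hs0 : 0 ≤ s := (hbox j).1
  have hs1 : s ≤ 1 := (hbox j).2
  have ht0 : 0 ≤ t := le_max_left _ _
  have ht1 : t ≤ 1 := max_le (by norm_num) (min_le_left _ _)
  set g' : Fin d → ℝ := Function.update gstar j t with hg'
  clear_value b sstar t s g'
  have hg'box : ∀ k, g' k ∈ Set.Icc (0:ℝ) 1 := by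
    intro k
    by_cases hk : k = j
    · subst hk
      simp only [hg', Function.update_self]
      exact ⟨ht0, ht1⟩
    · simp only [hg', Function.update_of_ne hk]
      exact hbox k
  have hle := hmin g' hg'box
  -- per-sample expansions
  have hE : ∀ i, (∑ k, β k * (x i k - g' k * x i k))
      = (∑ k, β k * (x i k - gstar k * x i k)) + β j * (s - t) * x i j := by
    intro i
    have h1 : (∑ k, (β k * (x i k - g' k * x i k) - β k * (x i k - gstar k * x i k)))
        = β j * (s - t) * x i j := by
      rw [Finset.sum_eq_single j]
      · simp only [hg', Function.update_self, hs]
        ring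
      · intro k _ hk
        simp only [hg', Function.update_of_ne hk]
        ring
      · intro h; exact absurd (Finset.mem_univ j) h
    have h2 : (∑ k, β k * (x i k - g' k * x i k))
        - (∑ k, β k * (x i k - gstar k * x i k))
        = β j * (s - t) * x i j := by
      rw [← Finset.sum_sub_distrib]; exact h1
    linarith
  have hF : ∀ i, (∑ k, (g' k * x i k) * x i k)
      = (∑ k, (gstar k * x i k) * x i k) + (t - s) * (x i j * x i j) := by
    intro i
    have h1 : (∑ k, ((g' k * x i k) * x i k - (gstar k * x i k) * x i k))
        = (t - s) * (x i j * x i j) := by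
      rw [Finset.sum_eq_single j]
      · simp only [hg', Function.update_self, hs]
        ring
      · intro k _ hk
        simp only [hg', Function.update_of_ne hk]
        ring
      · intro h; exact absurd (Finset.mem_univ j) h
    have h2 : (∑ k, (g' k * x i k) * x i k) - (∑ k, (gstar k * x i k) * x i k)
        = (t - s) * (x i j * x i j) := by
      rw [← Finset.sum_sub_distrib]; exact h1
    linarith
  have hdiff : J g' - J gstar = (1/(n:ℝ)) * ∑ i,
      ((2 * (β j * (s - t))) * ((∑ k, β k * (x i k - gstar k * x i k)) * x i j)
        + ((β j * (s - t))^2 + lam * (t - s)) * (x i j * x i j)) := by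
    rw [hJ g', hJ gstar, ← mul_sub, ← Finset.sum_sub_distrib]
    congr 1
    apply Finset.sum_congr rfl
    intro i _
    rw [hE i, hF i]
    ring
  have hsplit : J g' - J gstar
      = (2 * (β j * (s - t)))
          * ((1/(n:ℝ)) * ∑ i, ((∑ k, β k * (x i k - gstar k * x i k)) * x i j))
        + ((β j * (s - t))^2 + lam * (t - s)) * ((1/(n:ℝ)) * ∑ i, x i j * x i j) := by
    rw [hdiff, Finset.sum_add_distrib, ← Finset.mul_sum, ← Finset.mul_sum]
    ring
  have hS2 : (1/(n:ℝ)) * ∑ i, x i j * x i j = Cn j j := (hC j j).symm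
  have hS1 : (1/(n:ℝ)) * ∑ i, ((∑ k, β k * (x i k - gstar k * x i k)) * x i j)
      = β j * (1 - s) * Cn j j := by
    have hswap : ∑ i, ((∑ k, β k * (x i k - gstar k * x i k)) * x i j)
        = ∑ k, (β k * (1 - gstar k)) * ∑ i, x i k * x i j := by
      calc ∑ i, ((∑ k, β k * (x i k - gstar k * x i k)) * x i j)
          = ∑ i, ∑ k, (β k * (x i k - gstar k * x i k)) * x i j := by
            simp_rw [Finset.sum_mul]
        _ = ∑ k, ∑ i, (β k * (x i k - gstar k * x i k)) * x i j := Finset.sum_comm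
        _ = ∑ k, (β k * (1 - gstar k)) * ∑ i, x i k * x i j := by
            apply Finset.sum_congr rfl
            intro k _
            rw [Finset.mul_sum]
            apply Finset.sum_congr rfl
            intro i _
            ring
    rw [hswap, Finset.mul_sum]
    have hterm : ∀ k ∈ Finset.univ, (1/(n:ℝ)) * ((β k * (1 - gstar k)) * ∑ i, x i k * x i j)
        = (β k * (1 - gstar k)) * Cn k j := by
      intro k _
      rw [hC k j]; ring
    rw [Finset.sum_congr rfl hterm, Finset.sum_eq_single j]
    · rw [hs]
    · intro k _ hk
      rw [hdiag k j hk]; ring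
    · intro h; exact absurd (Finset.mem_univ j) h
  have heq : J g' - J gstar = Cn j j * ((s - t) * (b * (2 - s - t) - lam)) := by
    rw [hsplit, hS1, hS2, hbdef]
    ring
  have hfin : 0 ≤ (s - t) * (b * (2 - s - t) - lam) := by
    have h0 : 0 ≤ Cn j j * ((s - t) * (b * (2 - s - t) - lam)) := by
      rw [← heq]; linarith
    nlinarith [hpos j, h0]
  have hclamp : (s - t) * (sstar - t) ≤ 0 := by
    rcases le_total sstar 0 with h | h
    · have htt : t = 0 := by
        rw [ht, min_eq_right (le_trans h zero_le_one), max_eq_left h]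
      rw [htt]
      nlinarith [mul_nonneg hs0 (neg_nonneg.mpr h)]
    · rcases le_total 1 sstar with h1 | h1
      · have htt : t = 1 := by
          rw [ht, min_eq_left h1, max_eq_right zero_le_one]
        rw [htt]
        nlinarith [mul_nonneg (sub_nonneg.mpr hs1) (sub_nonneg.mpr h1)]
      · have htt : t = sstar := by
          rw [ht, min_eq_right h1, max_eq_right h]
        rw [htt]
        nlinarith
  have hbne : b ≠ 0 := ne_of_gt hb
  have hbs : b * sstar = b - lam / 2 := by
    rw [hsstar]
    field_simp
  have h4 : b * ((s - t) * (sstar - t)) ≤ 0 := by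
    have := mul_le_mul_of_nonneg_left hclamp hb.le
    simpa using this
  have h5 : (s - t) * (b * sstar) = (s - t) * (b - lam / 2) := by rw [hbs]
  have hid : b * (s - t)^2
      = -((s - t) * (b * (2 - s - t) - lam)) + 2 * (b * ((s - t) * (sstar - t)))
        + 2 * ((s - t) * (b - lam / 2) - (s - t) * (b * sstar)) := by ring
  have key2 : b * (s - t)^2 ≤ 0 := by
    rw [hid]
    linarith [hfin, h4, h5]
  have h6 : (s - t)^2 = 0 :=
    le_antisymm (by nlinarith [key2, hb, sq_nonneg (s - t)]) (sq_nonneg _)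
  have h7 : s - t = 0 := by
    exact pow_eq_zero_iff (two_ne_zero) |>.mp h6
  linarith
end

section
/- Let x_1, …, x_n ∈ ℝ^d with empirical second-moment matrix C_n = (1/n) ∑_{i=1}^n x_i x_iᵀ, let β ∈ ℝ^d with all coordinates nonzero, and suppose C_n is diagonal with positive diagonal entries. If λ ≥ 2 β_j² for some index j, then the minimizer g* ∈ [0,1]^d of J(g) = (1/n) ∑_{i=1}^n [ (βᵀ(x_i − g ⊙ x_i))² + λ ⟨g ⊙ x_i, x_i⟩ ] satisfies (g*)_j = 0. -/
open Finset

/-- **Sparsity in the uncorrelated-features case.**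
If the empirical second-moment matrix `C_n = (1/n) ∑ i x_i x_iᵀ` is diagonal with
positive diagonal entries, every coordinate of `β` is nonzero, and
`λ ≥ 2 β_j²` for some index `j`, then any minimizer `g*` over `[0,1]^d` of
`J(g) = (1/n) ∑ i [ (βᵀ(x_i − g ⊙ x_i))² + λ ⟨g ⊙ x_i, x_i⟩ ]`
satisfies `(g*)_j = 0`. -/
theorem mind_uncorrelated_sparsity {d n : ℕ}
    (x : Fin n → Fin d → ℝ)
    (Cn : Matrix (Fin d) (Fin d) ℝ)
    (hCn : Cn = (1 / (n : ℝ)) • ∑ i, Matrix.vecMulVec (x i) (x i))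
    (β : Fin d → ℝ) (hβ : ∀ k, β k ≠ 0)
    (hdiag : ∀ k l, k ≠ l → Cn k l = 0)
    (hpos : ∀ k, 0 < Cn k k)
    (lam : ℝ) (hlam : 0 < lam)
    (j : Fin d) (hlamj : 2 * (β j) ^ 2 ≤ lam)
    (J : (Fin d → ℝ) → ℝ)
    (hJ : ∀ g : Fin d → ℝ,
      J g = (1 / (n : ℝ)) * ∑ i,
        ((∑ k, β k * (x i k - g k * x i k)) ^ 2
          + lam * ∑ k, (g k * x i k) * x i k))
    (gstar : Fin d → ℝ) (hg : ∀ k, gstar k ∈ Set.Icc (0 : ℝ) 1)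
    (hmin : ∀ g : Fin d → ℝ, (∀ k, g k ∈ Set.Icc (0 : ℝ) 1) → J gstar ≤ J g) :
    gstar j = 0 := by
  set a := gstar j with ha
  have hC : ∀ k l, Cn k l = (1/(n:ℝ)) * ∑ i, x i k * x i l := by
    intro k l
    rw [hCn]
    simp [Matrix.sum_apply, Matrix.vecMulVec_apply, Finset.mul_sum]
  set g' : Fin d → ℝ := Function.update gstar j 0 with hg'
  have hg'mem : ∀ k, g' k ∈ Set.Icc (0:ℝ) 1 := by
    intro k
    by_cases hk : k = j
    · subst hk; simp [hg']
    · simpa [hg', Function.update_of_ne hk] using hg k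
  have h1 : ∀ i, (∑ k, β k * (x i k - g' k * x i k))
      = (∑ k, β k * (x i k - gstar k * x i k)) + β j * a * x i j := by
    intro i
    have hdiff : (∑ k, (β k * (x i k - g' k * x i k) - β k * (x i k - gstar k * x i k)))
        = β j * a * x i j := by
      rw [Finset.sum_eq_single j]
      · simp [hg']; ring
      · intro k _ hk; simp [hg', Function.update_of_ne hk]
      · intro h; exact absurd (Finset.mem_univ j) h
    rw [Finset.sum_sub_distrib] at hdiff
    linarith
  have h2 : ∀ i, (∑ k, (g' k * x i k) * x i k)
      = (∑ k, (gstar k * x i k) * x i k) - a * x i j * x i j := by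
    intro i
    have hdiff : (∑ k, ((g' k * x i k) * x i k - (gstar k * x i k) * x i k))
        = -(a * x i j * x i j) := by
      rw [Finset.sum_eq_single j]
      · simp [hg', ha]
      · intro k _ hk; simp [hg', Function.update_of_ne hk]
      · intro h; exact absurd (Finset.mem_univ j) h
    rw [Finset.sum_sub_distrib] at hdiff
    linarith
  have hA : (1/(n:ℝ)) * ∑ i, x i j * (∑ k, β k * (x i k - gstar k * x i k))
      = β j * (1 - a) * Cn j j := by
    have e1 : ∀ i, x i j * (∑ k, β k * (x i k - gstar k * x i k))
        = ∑ k, β k * (1 - gstar k) * (x i j * x i k) := by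
      intro i; rw [Finset.mul_sum]
      exact Finset.sum_congr rfl (fun k _ => by ring)
    calc (1/(n:ℝ)) * ∑ i, x i j * (∑ k, β k * (x i k - gstar k * x i k))
        = (1/(n:ℝ)) * ∑ i, ∑ k, β k * (1 - gstar k) * (x i j * x i k) := by
          rw [Finset.sum_congr rfl (fun i _ => e1 i)]
      _ = ∑ k, β k * (1 - gstar k) * ((1/(n:ℝ)) * ∑ i, x i j * x i k) := by
          rw [Finset.sum_comm, Finset.mul_sum]
          refine Finset.sum_congr rfl (fun k _ => ?_)
          simp only [Finset.mul_sum]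
          exact Finset.sum_congr rfl (fun i _ => by ring)
      _ = ∑ k, β k * (1 - gstar k) * Cn j k :=
          Finset.sum_congr rfl (fun k _ => by rw [← hC j k])
      _ = β j * (1 - a) * Cn j j := by
          rw [Finset.sum_eq_single j]
          · intro k _ hk
            rw [hdiag j k (Ne.symm hk), mul_zero]
          · intro h; exact absurd (Finset.mem_univ j) h
  have hCjj : (1/(n:ℝ)) * ∑ i, x i j * x i j = Cn j j := (hC j j).symm
  have hsum : (∑ i, ((∑ k, β k * (x i k - g' k * x i k)) ^ 2
        + lam * ∑ k, (g' k * x i k) * x i k))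
      = (∑ i, ((∑ k, β k * (x i k - gstar k * x i k)) ^ 2
        + lam * ∑ k, (gstar k * x i k) * x i k))
        + (2 * β j * a) * (∑ i, x i j * (∑ k, β k * (x i k - gstar k * x i k)))
        + ((β j)^2 * a^2 - lam * a) * (∑ i, x i j * x i j) := by
    have e : ∀ i, ((∑ k, β k * (x i k - g' k * x i k)) ^ 2
          + lam * ∑ k, (g' k * x i k) * x i k)
        = (((∑ k, β k * (x i k - gstar k * x i k)) ^ 2
          + lam * ∑ k, (gstar k * x i k) * x i k)
          + (2 * β j * a) * (x i j * (∑ k, β k * (x i k - gstar k * x i k)))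
          + ((β j)^2 * a^2 - lam * a) * (x i j * x i j)) := by
      intro i; rw [h1 i, h2 i]; ring
    rw [Finset.sum_congr rfl (fun i _ => e i), Finset.sum_add_distrib,
      Finset.sum_add_distrib, ← Finset.mul_sum, ← Finset.mul_sum]
  have key : J g' = J gstar + (2 * β j * a) * (β j * (1 - a) * Cn j j)
      + ((β j)^2 * a^2 - lam * a) * Cn j j := by
    rw [hJ g', hJ gstar, hsum, ← hA, ← hCjj]
    ring
  have hle := hmin g' hg'mem
  rw [key] at hle
  have h0 : 0 ≤ (2 * β j * a) * (β j * (1 - a) * Cn j j)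
      + ((β j)^2 * a^2 - lam * a) * Cn j j := by linarith
  have ha0 : 0 ≤ a := (hg j).1
  have ha1 : a ≤ 1 := (hg j).2
  have hbne := hβ j
  have hb : 0 < (β j)^2 := by positivity
  by_contra hne
  have ha' : 0 < a := lt_of_le_of_ne ha0 (Ne.symm hne)
  have hc := hpos j
  nlinarith [mul_pos hc (mul_pos (mul_pos hb ha') ha'),
    mul_nonneg (mul_nonneg hc.le ha0) (by linarith : (0:ℝ) ≤ lam - 2 * (β j)^2)]
end
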